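/- Suppose a family of probability measures {μ_ε}_{ε>0} on a Polish space S satisfies a large deviation principle with good rate function J, and let D = {a ∈ S : J(a) < ∞}. Let Ŝ be a Polish space, f : S → Ŝ a measurable map, and U ⊆ S an open set with D ⊆ U such that f restricted to U is continuous. Then {μ_ε ∘ f^{-1}}_{ε>0} satisfies a large deviation principle on Ŝ with good rate function Ĵ(b) = inf{ J(a) : a ∈ f^{-1}({b}) }. -/
import Mathlib


open Filter Set MeasureTheory
open scoped ENNReal

/-- `μ ε` satisfies an LDP with speed `ε²` and rate `J`: for every Borel set `A`,
`−inf_{A°} J ≤ liminf_{ε↘0} ε² log μ_ε(A) ≤ limsup_{ε↘0} ε² log μ_ε(A) ≤ −inf_{Ā} J`. -/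
def SatisfiesLDP {S : Type*} [TopologicalSpace S] [MeasurableSpace S]
    (μ : ℝ → Measure S) (J : S → ℝ≥0∞) : Prop :=
  ∀ A : Set S, MeasurableSet A →
    (-(⨅ a ∈ interior A, (J a : EReal)) ≤
        liminf (fun ε : ℝ => ((ε ^ 2 : ℝ) : EReal) * ENNReal.log (μ ε A))
          (nhdsWithin 0 (Ioi (0:ℝ)))) ∧
    (limsup (fun ε : ℝ => ((ε ^ 2 : ℝ) : EReal) * ENNReal.log (μ ε A))
        (nhdsWithin 0 (Ioi (0:ℝ))) ≤
      -(⨅ a ∈ closure A, (J a : EReal)))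

/-- `J` is a good rate function: lower semicontinuous with compact sublevel sets. -/
def IsGoodRate {S : Type*} [TopologicalSpace S] (J : S → ℝ≥0∞) : Prop :=
  LowerSemicontinuous J ∧ ∀ c : ℝ≥0∞, c ≠ ⊤ → IsCompact {a | J a ≤ c}

/-- Lemma 7.1 (lm.cntr), modified contraction principle: if `{μ_ε}` are Borel
probability measures on a Polish space `S` satisfying an LDP with good rate `J`,
`f : S → Ŝ` is measurable, and `f` is continuous on an open `U` containing the
effective domain `D = {J < ∞}`, then `{μ_ε ∘ f⁻¹}` satisfies an LDP on the Polish
space `Ŝ` with good rate `Ĵ(b) = inf {J(a) : f(a) = b}`. -/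

lemma mcp_attain {S : Type*} [MetricSpace S] {T : Type*} [MetricSpace T]
    {J : S → ℝ≥0∞} (hJc : ∀ c : ℝ≥0∞, c ≠ ⊤ → IsCompact {a | J a ≤ c})
    {f : S → T} {U : Set S} (hDU : {a | J a ≠ ⊤} ⊆ U) (hfc : ContinuousOn f U)
    (b : T) (c : ℝ≥0∞) (hc : c ≠ ⊤) (h : (⨅ a ∈ f ⁻¹' {b}, J a) ≤ c) :
    ∃ a, f a = b ∧ J a ≤ c := by
  set ι := {d : ℝ≥0∞ // c < d ∧ d ≠ ⊤} with hι_def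
  have hι : Nonempty ι := ⟨⟨c + 1, ENNReal.lt_add_right hc one_ne_zero,
    by simp [ENNReal.add_eq_top, hc]⟩⟩
  set K : ι → Set S := fun d => {a | J a ≤ d.1} ∩ f ⁻¹' {b} with hK_def
  have hKU : ∀ d : ι, {a | J a ≤ d.1} ⊆ U := fun d a ha =>
    hDU (ne_top_of_le_ne_top d.2.2 ha)
  have hcpt : ∀ d : ι, IsCompact {a | J a ≤ d.1} := fun d => hJc d.1 d.2.2
  have hcl : ∀ d : ι, IsClosed (K d) := fun d =>
    (hfc.mono (hKU d)).preimage_isClosed_of_isClosed (hcpt d).isClosed isClosed_singleton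
  have hKcpt : ∀ d : ι, IsCompact (K d) := fun d =>
    (hcpt d).of_isClosed_subset (hcl d) inter_subset_left
  have hKne : ∀ d : ι, (K d).Nonempty := by
    intro d
    have hlt : (⨅ a ∈ f ⁻¹' {b}, J a) < d.1 := lt_of_le_of_lt h d.2.1
    simp only [iInf_lt_iff] at hlt
    obtain ⟨a, ha, hlt⟩ := hlt
    exact ⟨a, hlt.le, ha⟩
  have hdir : Directed (· ⊇ ·) K := by
    intro d₁ d₂
    refine ⟨⟨min d₁.1 d₂.1, lt_min d₁.2.1 d₂.2.1,
      ne_top_of_le_ne_top d₁.2.2 (min_le_left _ _)⟩, ?_, ?_⟩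
    · rintro a ⟨h1, h2⟩
      have h1' : J a ≤ min d₁.1 d₂.1 := h1
      exact ⟨show J a ≤ d₁.1 from h1'.trans (min_le_left _ _), h2⟩
    · rintro a ⟨h1, h2⟩
      have h1' : J a ≤ min d₁.1 d₂.1 := h1
      exact ⟨show J a ≤ d₂.1 from h1'.trans (min_le_right _ _), h2⟩
  obtain ⟨a, ha⟩ :=
    IsCompact.nonempty_iInter_of_directed_nonempty_isCompact_isClosed K hdir hKne hKcpt hcl
  rw [mem_iInter] at ha
  refine ⟨a, (ha hι.some).2, ?_⟩
  by_contra hlt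
  push_neg at hlt
  obtain ⟨d, hcd, hdlt⟩ := exists_between
    (lt_min (ENNReal.lt_add_right hc one_ne_zero) hlt)
  have hdne : d ≠ ⊤ := ne_top_of_lt hdlt
  have hJd : J a ≤ d := (ha ⟨d, hcd, hdne⟩).1
  exact absurd hJd (not_le.2 (lt_of_lt_of_le hdlt (min_le_right _ _)))

theorem modified_contraction_principle
    {S : Type*} [MetricSpace S] [CompleteSpace S] [SecondCountableTopology S]
    [MeasurableSpace S] [BorelSpace S]
    {T : Type*} [MetricSpace T] [CompleteSpace T] [SecondCountableTopology T]
    [MeasurableSpace T] [BorelSpace T]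
    (μ : ℝ → Measure S) (hprob : ∀ ε : ℝ, 0 < ε → IsProbabilityMeasure (μ ε))
    (J : S → ℝ≥0∞) (hJ : IsGoodRate J) (hLDP : SatisfiesLDP μ J)
    (f : S → T) (hf : Measurable f)
    (U : Set S) (hU : IsOpen U) (hDU : {a | J a ≠ ⊤} ⊆ U)
    (hfc : ContinuousOn f U) :
    SatisfiesLDP (fun ε => (μ ε).map f) (fun b => ⨅ a ∈ f ⁻¹' {b}, J a) ∧
      IsGoodRate (fun b => ⨅ a ∈ f ⁻¹' {b}, J a) := by
  set Jh : T → ℝ≥0∞ := fun b => ⨅ a ∈ f ⁻¹' {b}, J a with hJh_def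
  -- sublevel sets of Jh are images of sublevel sets of J
  have hset : ∀ c : ℝ≥0∞, c ≠ ⊤ → {b | Jh b ≤ c} = f '' {a | J a ≤ c} := by
    intro c hc
    ext b
    constructor
    · intro hb
      obtain ⟨a, hab, hle⟩ := mcp_attain hJ.2 hDU hfc b c hc hb
      exact ⟨a, hle, hab⟩
    · rintro ⟨a, ha, rfl⟩
      have hmem : a ∈ f ⁻¹' {f a} := rfl
      show Jh (f a) ≤ c
      exact le_trans (iInf₂_le a hmem) ha
  have himgcpt : ∀ c : ℝ≥0∞, c ≠ ⊤ → IsCompact {b | Jh b ≤ c} := by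
    intro c hc
    rw [hset c hc]
    exact (hJ.2 c hc).image_of_continuousOn
      (hfc.mono (fun a ha => hDU (ne_top_of_le_ne_top hc ha)))
  -- continuity of f at points where J is finite
  have hcont : ∀ a : S, J a ≠ ⊤ → ContinuousAt f a := fun a ha =>
    hfc.continuousAt (hU.mem_nhds (hDU ha))
  constructor
  · -- the LDP for the pushforward measures
    intro Ab hAb
    have hA : MeasurableSet (f ⁻¹' Ab) := hf hAb
    obtain ⟨h1, h2⟩ := hLDP (f ⁻¹' Ab) hA
    have hmap : ∀ ε : ℝ, (μ ε).map f Ab = μ ε (f ⁻¹' Ab) := fun ε =>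
      Measure.map_apply hf hAb
    constructor
    · simp only [hmap]
      refine le_trans ?_ h1
      rw [EReal.neg_le_neg_iff]
      refine le_iInf₂ fun b hb => ?_
      by_cases hJhb : Jh b = ⊤
      · rw [hJhb, EReal.coe_ennreal_top]
        exact le_top
      · obtain ⟨a, hab, hle⟩ := mcp_attain hJ.2 hDU hfc b (Jh b) hJhb le_rfl
        have haT : J a ≠ ⊤ := ne_top_of_le_ne_top hJhb hle
        have hmem : a ∈ interior (f ⁻¹' Ab) := by
          rw [mem_interior_iff_mem_nhds]
          exact mem_of_superset
            (((hcont a haT).preimage_mem_nhds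
              (isOpen_interior.mem_nhds (hab ▸ hb))))
            (preimage_mono interior_subset)
        calc ⨅ a ∈ interior (f ⁻¹' Ab), (J a : EReal) ≤ (J a : EReal) := iInf₂_le a hmem
          _ ≤ (Jh b : EReal) := EReal.coe_ennreal_le_coe_ennreal_iff.2 hle
    · simp only [hmap]
      refine le_trans h2 ?_
      rw [EReal.neg_le_neg_iff]
      refine le_iInf₂ fun a ha => ?_
      by_cases haT : J a = ⊤
      · rw [haT, EReal.coe_ennreal_top]
        exact le_top
      · have hfa : f a ∈ closure Ab :=
          closure_mono (image_preimage_subset f Ab)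
            ((hcont a haT).continuousWithinAt.mem_closure_image ha)
        calc ⨅ b ∈ closure Ab, (Jh b : EReal) ≤ (Jh (f a) : EReal) := iInf₂_le (f a) hfa
          _ ≤ (J a : EReal) := EReal.coe_ennreal_le_coe_ennreal_iff.2 (iInf₂_le a (show a ∈ f ⁻¹' {f a} from rfl))
  · -- Jh is a good rate function
    constructor
    · rw [lowerSemicontinuous_iff_isClosed_preimage]
      intro y
      by_cases hy : y = ⊤
      · have : Jh ⁻¹' Iic y = univ := by
          ext b; simp [hy]
        rw [this]
        exact isClosed_univ
      · have : Jh ⁻¹' Iic y = {b | Jh b ≤ y} := rfl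
        rw [this]
        exact (himgcpt y hy).isClosed
    · exact fun c hc => himgcpt c hc
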